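/- Let G act linearly and isometrically on a Hilbert space M, and X a random variable with E‖X‖² < ∞ and E(X) = t₀ ≠ 0. Suppose there exists a C¹ curve φ : (−a, a) → M with values in the orbit [t₀], with φ(0) = t₀ and φ'(0) = v ≠ 0, and that the support of X is not contained in the hyperplane v^⊥. Then there exist g ∈ G, y ∈ M and r > 0 with P(X ∈ B(y,r)) > 0 such that ‖g·t₀ − z‖ < ‖t₀ − z‖ for all z ∈ B(y,r); in particular P(d_Q([t₀],[X]) < ‖t₀ − X‖) > 0 and [t₀] is not a Fréchet mean of [X]. -/

import Mathlib

open MeasureTheory Filter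
open scoped Topology
open scoped RealInnerProductSpace

private lemma iInf_sq_eq {ι : Sort*} [Nonempty ι] (f : ι → ℝ) (h0 : ∀ i, 0 ≤ f i) :
    (⨅ i, (f i) ^ 2) = (⨅ i, f i) ^ 2 := by
  have hbdd : BddBelow (Set.range f) := ⟨0, by rintro _ ⟨i, rfl⟩; exact h0 i⟩
  have hbdd2 : BddBelow (Set.range fun i => (f i) ^ 2) :=
    ⟨0, by rintro _ ⟨i, rfl⟩; positivity⟩
  have hd0 : 0 ≤ ⨅ i, f i := le_ciInf h0
  have hs0 : 0 ≤ ⨅ i, (f i) ^ 2 := le_ciInf fun i => sq_nonneg _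
  apply le_antisymm
  · have h1 : Real.sqrt (⨅ i, (f i) ^ 2) ≤ ⨅ i, f i := by
      refine le_ciInf fun i => ?_
      calc Real.sqrt (⨅ i, (f i) ^ 2) ≤ Real.sqrt ((f i) ^ 2) :=
            Real.sqrt_le_sqrt (ciInf_le hbdd2 i)
        _ = f i := by rw [Real.sqrt_sq (h0 i)]
    calc (⨅ i, (f i) ^ 2) = (Real.sqrt (⨅ i, (f i) ^ 2)) ^ 2 := (Real.sq_sqrt hs0).symm
      _ ≤ (⨅ i, f i) ^ 2 := pow_le_pow_left₀ (Real.sqrt_nonneg _) h1 2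
  · exact le_ciInf fun i => pow_le_pow_left₀ hd0 (ciInf_le hbdd i) 2

private lemma exists_gt_of_hasDerivAt_ne {f : ℝ → ℝ} {L : ℝ} (hf : HasDerivAt f L 0)
    (hL : L ≠ 0) {a : ℝ} (ha : 0 < a) : ∃ t ∈ Set.Ioo (-a) a, f 0 < f t := by
  have hslope := hasDerivAt_iff_tendsto_slope.1 hf
  rcases hL.lt_or_gt with hL' | hL'
  · have h1 : ∀ᶠ t in 𝓝[≠] (0:ℝ), slope f 0 t < 0 := hslope (Iio_mem_nhds hL')
    have hle : 𝓝[<] (0:ℝ) ≤ 𝓝[≠] (0:ℝ) :=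
      nhdsWithin_mono 0 fun x hx => Set.mem_compl_singleton_iff.2 (ne_of_lt hx)
    have h2 : ∀ᶠ t in 𝓝[<] (0:ℝ), slope f 0 t < 0 := h1.filter_mono hle
    have h3 : ∀ᶠ t in 𝓝[<] (0:ℝ), t ∈ Set.Ioo (-a) 0 :=
      eventually_of_mem (Ioo_mem_nhdsLT (neg_lt_zero.2 ha)) fun x hx => hx
    obtain ⟨t, hts, hta, htb⟩ := (h2.and h3).exists
    refine ⟨t, ⟨hta, htb.trans ha⟩, ?_⟩
    rw [slope_def_field] at hts
    have h4 : (f t - f 0) / t < 0 := by simpa using hts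
    have h5 : 0 < f t - f 0 := by
      rcases div_neg_iff.1 h4 with ⟨h5, h6⟩ | ⟨h5, h6⟩
      · exact h5
      · linarith
    linarith
  · have h1 : ∀ᶠ t in 𝓝[≠] (0:ℝ), 0 < slope f 0 t := hslope (Ioi_mem_nhds hL')
    have hle : 𝓝[>] (0:ℝ) ≤ 𝓝[≠] (0:ℝ) :=
      nhdsWithin_mono 0 fun x hx => Set.mem_compl_singleton_iff.2 (ne_of_gt hx)
    have h2 : ∀ᶠ t in 𝓝[>] (0:ℝ), 0 < slope f 0 t := h1.filter_mono hle
    have h3 : ∀ᶠ t in 𝓝[>] (0:ℝ), t ∈ Set.Ioo 0 a :=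
      eventually_of_mem (Ioo_mem_nhdsGT ha) fun x hx => hx
    obtain ⟨t, hts, hta, htb⟩ := (h2.and h3).exists
    refine ⟨t, ⟨by linarith, htb⟩, ?_⟩
    rw [slope_def_field] at hts
    have h4 : 0 < (f t - f 0) / t := by simpa using hts
    have h5 : 0 < f t - f 0 := by
      rcases div_pos_iff.1 h4 with ⟨h5, h6⟩ | ⟨h5, h6⟩
      · exact h5
      · linarith
    linarith

set_option maxHeartbeats 2000000 in
/-- If the orbit `[t₀]` contains a C¹ curve `φ` through `t₀` with nonzero
velocity `v`, and the support of `X` is not contained in `v^⊥`, then there are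
`g, y, r` with `P(X ∈ B(y,r)) > 0` and `‖g•t₀ − z‖ < ‖t₀ − z‖` on `B(y,r)`;
in particular `P(d_Q([t₀],[X]) < ‖t₀−X‖) > 0` and `[t₀]` is not a Fréchet mean
of `[X]`. -/
theorem stmt7 {M G Ω : Type*} [NormedAddCommGroup M] [InnerProductSpace ℝ M]
    [CompleteSpace M] [Group G] [MulAction G M] [MeasurableSpace Ω]
    (μ : Measure Ω) [IsProbabilityMeasure μ]
    (hlin : ∀ g : G, IsLinearMap ℝ fun x : M => g • x)
    (hiso : ∀ (g : G) (x : M), ‖g • x‖ = ‖x‖)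
    (X : Ω → M) (t₀ : M) (ht₀ : t₀ ≠ 0)
    (hX2 : Integrable (fun ω => ‖X ω‖ ^ 2) μ)
    (hXint : Integrable X μ)
    (hXmean : ∫ ω, X ω ∂μ = t₀)
    (a : ℝ) (ha : 0 < a) (φ : ℝ → M) (v : M)
    (hφorb : ∀ x ∈ Set.Ioo (-a) a, φ x ∈ MulAction.orbit G t₀)
    (hC1 : ContDiffOn ℝ 1 φ (Set.Ioo (-a) a))
    (hφ0 : φ 0 = t₀)
    (hder : HasDerivAt φ v 0) (hv : v ≠ 0)
    (hsupp : ∃ y : M, (∀ r > 0, 0 < μ {ω | X ω ∈ Metric.ball y r}) ∧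
      (inner ℝ y v : ℝ) ≠ 0) :
    (∃ (g : G) (y : M) (r : ℝ), 0 < r ∧ 0 < μ {ω | X ω ∈ Metric.ball y r} ∧
      ∀ z ∈ Metric.ball y r, ‖g • t₀ - z‖ < ‖t₀ - z‖) ∧
    0 < μ {ω | (⨅ g : G, ‖g • t₀ - X ω‖) < ‖t₀ - X ω‖} ∧
    ¬ (∀ m : M, (∫ ω, ⨅ g : G, ‖g • X ω - t₀‖ ^ 2 ∂μ)
        ≤ ∫ ω, ⨅ g : G, ‖g • X ω - m‖ ^ 2 ∂μ) := by
  classical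
  obtain ⟨y, hy, hyv⟩ := hsupp
  -- Part 1 : find the group element and the ball
  have hfder : HasDerivAt (fun t => ⟪y, φ t⟫) ⟪y, v⟫ 0 := by
    have h := (innerSL ℝ y).hasFDerivAt.comp_hasDerivAt (x := (0:ℝ)) hder
    simp [Function.comp] at h
    exact h
  obtain ⟨t₁, ht₁, hft⟩ := exists_gt_of_hasDerivAt_ne hfder hyv ha
  have hpos : 0 < ⟪y, φ t₁ - t₀⟫ := by
    rw [inner_sub_right, ← hφ0]; linarith
  obtain ⟨g₀, hg₀⟩ := MulAction.mem_orbit_iff.1 (hφorb t₁ ht₁)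
  set c : M := φ t₁ - t₀ with hc
  clear_value c
  have hcy : 0 < ⟪y, c⟫ := hpos
  have hcne : c ≠ 0 := by
    intro h; rw [h, inner_zero_right] at hcy; exact lt_irrefl _ hcy
  have hcpos : 0 < ‖c‖ := norm_pos_iff.2 hcne
  set r : ℝ := ⟪y, c⟫ / (2 * ‖c‖) with hrdef
  clear_value r
  have hr : 0 < r := by rw [hrdef]; exact div_pos hcy (by positivity)
  have hkey : ∀ z ∈ Metric.ball y r, ‖g₀ • t₀ - z‖ < ‖t₀ - z‖ := by
    intro z hz
    have hzy : ‖z - y‖ < r := by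
      rw [← dist_eq_norm]; exact Metric.mem_ball.1 hz
    have hinner : 0 < ⟪c, z⟫ := by
      have h1 : ⟪c, z⟫ = ⟪c, y⟫ + ⟪c, z - y⟫ := by
        rw [← inner_add_right]; congr 1; abel
      have h2 := abs_real_inner_le_norm c (z - y)
      have h3 : ‖c‖ * ‖z - y‖ < ‖c‖ * r := mul_lt_mul_of_pos_left hzy hcpos
      have h4 : ‖c‖ * r = ⟪y, c⟫ / 2 := by
        rw [hrdef]; field_simp
      have h5 : ⟪c, y⟫ = ⟪y, c⟫ := real_inner_comm _ _
      have h6 := (abs_le.1 h2).1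
      linarith
    have hnorm : ‖g₀ • t₀‖ = ‖t₀‖ := hiso g₀ t₀
    have hsq : ‖g₀ • t₀ - z‖ ^ 2 < ‖t₀ - z‖ ^ 2 := by
      rw [norm_sub_sq_real, norm_sub_sq_real, hnorm]
      have h6 : ⟪g₀ • t₀, z⟫ = ⟪t₀, z⟫ + ⟪c, z⟫ := by
        have h7 : g₀ • t₀ = t₀ + c := by rw [hg₀, hc]; abel
        rw [h7, inner_add_left]
      linarith
    exact lt_of_pow_lt_pow_left₀ 2 (norm_nonneg _) hsq
  have hsecond : 0 < μ {ω | (⨅ g : G, ‖g • t₀ - X ω‖) < ‖t₀ - X ω‖} := by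
    refine lt_of_lt_of_le (hy r hr) (measure_mono ?_)
    intro ω hω
    have h1 : (⨅ g : G, ‖g • t₀ - X ω‖) ≤ ‖g₀ • t₀ - X ω‖ :=
      ciInf_le ⟨0, by rintro _ ⟨g, rfl⟩; exact norm_nonneg _⟩ g₀
    exact h1.trans_lt (hkey _ hω)
  refine ⟨⟨g₀, y, r, hr, hy r hr, hkey⟩, hsecond, ?_⟩
  intro Hctr
  borelize M
  -- algebra facts
  have hsmul_sub : ∀ (g : G) (p q : M), g • (p - q) = g • p - g • q :=
    fun g p q => (hlin g).map_sub p q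
  have hiso2 : ∀ (g : G) (p q : M), ‖g • p - g • q‖ = ‖p - q‖ := fun g p q => by
    rw [← hsmul_sub]; exact hiso g _
  set dd : M → M → ℝ := fun m x => ⨅ g : G, ‖g • x - m‖ with hdd
  clear_value dd
  have bdd : ∀ (m x : M), BddBelow (Set.range fun g : G => ‖g • x - m‖) :=
    fun m x => ⟨0, by rintro _ ⟨g, rfl⟩; exact norm_nonneg _⟩
  have dd_nonneg : ∀ m x, 0 ≤ dd m x := fun m x => by
    simp only [hdd]; exact le_ciInf fun g => norm_nonneg _
  have dd_le' : ∀ m x (g : G), dd m x ≤ ‖g • x - m‖ := fun m x g => by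
    simp only [hdd]; exact ciInf_le (bdd m x) g
  have dd_le : ∀ m x, dd m x ≤ ‖x - m‖ := fun m x => by
    simpa using dd_le' m x (1 : G)
  have dd_lip : ∀ m x x', dd m x ≤ dd m x' + ‖x - x'‖ := by
    intro m x x'
    have h : dd m x - ‖x - x'‖ ≤ dd m x' := by
      simp only [hdd]
      refine le_ciInf fun g => ?_
      have h1 : (⨅ g : G, ‖g • x - m‖) ≤ ‖g • x - m‖ := ciInf_le (bdd m x) g
      have h2 : ‖g • x - m‖ ≤ ‖g • x' - m‖ + ‖x - x'‖ := by
        calc ‖g • x - m‖ = ‖(g • x' - m) + (g • x - g • x')‖ := by congr 1; abel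
          _ ≤ ‖g • x' - m‖ + ‖g • x - g • x'‖ := norm_add_le _ _
          _ = ‖g • x' - m‖ + ‖x - x'‖ := by rw [hiso2]
      linarith
    linarith
  have dd_sq : ∀ m x, (⨅ g : G, ‖g • x - m‖ ^ 2) = (dd m x) ^ 2 := fun m x => by
    simp only [hdd]; exact iInf_sq_eq _ (fun g => norm_nonneg _)
  have dd_cont : ∀ m, Continuous (dd m) := by
    intro m
    refine LipschitzWith.continuous (K := 1) (LipschitzWith.of_dist_le_mul fun x x' => ?_)
    rw [NNReal.coe_one, one_mul, Real.dist_eq, dist_eq_norm]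
    rw [abs_sub_le_iff]
    constructor
    · linarith [dd_lip m x x']
    · have := dd_lip m x' x
      rw [norm_sub_rev x'] at this
      linarith
  -- integrability toolkit
  have hXaesm := hXint.aestronglyMeasurable
  have hXnorm := hXint.norm
  have hnormsq_int : ∀ m : M, Integrable (fun ω => (‖X ω‖ + ‖m‖) ^ 2) μ := by
    intro m
    have h : (fun ω => (‖X ω‖ + ‖m‖) ^ 2)
        = fun ω => ‖X ω‖ ^ 2 + (2 * ‖m‖) * ‖X ω‖ + ‖m‖ ^ 2 := by
      funext ω; ring
    rw [h]; exact (hX2.add (hXnorm.const_mul _)).add (integrable_const _)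
  have hdd2_int : ∀ m : M, Integrable (fun ω => (dd m (X ω)) ^ 2) μ := by
    intro m
    refine Integrable.mono' (hnormsq_int m)
      (((dd_cont m).pow 2).comp_aestronglyMeasurable hXaesm) (ae_of_all _ fun ω => ?_)
    have h1 := dd_le m (X ω); have h2 := dd_nonneg m (X ω)
    have h3 : ‖X ω - m‖ ≤ ‖X ω‖ + ‖m‖ := norm_sub_le _ _
    rw [Real.norm_eq_abs, abs_of_nonneg (by positivity)]
    nlinarith
  have hXnormc : Integrable (fun ω => ‖X ω‖ + ‖t₀‖) μ := hXnorm.add (integrable_const _)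
  have hdd1_int : Integrable (fun ω => dd t₀ (X ω)) μ := by
    refine Integrable.mono' hXnormc
      ((dd_cont t₀).comp_aestronglyMeasurable hXaesm) (ae_of_all _ fun ω => ?_)
    have h1 := dd_le t₀ (X ω); have h2 := dd_nonneg t₀ (X ω)
    have h3 : ‖X ω - t₀‖ ≤ ‖X ω‖ + ‖t₀‖ := norm_sub_le _ _
    rw [Real.norm_eq_abs, abs_of_nonneg h2]
    linarith
  have hXt2 : Integrable (fun ω => ‖X ω - t₀‖ ^ 2) μ := by
    refine Integrable.mono' (hnormsq_int t₀)
      (((continuous_id.sub continuous_const).norm.pow 2).comp_aestronglyMeasurable hXaesm)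
      (ae_of_all _ fun ω => ?_)
    have h3 : ‖X ω - t₀‖ ≤ ‖X ω‖ + ‖t₀‖ := norm_sub_le _ _
    rw [Real.norm_eq_abs, abs_of_nonneg (by positivity)]
    nlinarith [norm_nonneg (X ω - t₀)]
  -- the strict gap δ
  set δ : ℝ := (∫ ω, ‖X ω - t₀‖ ^ 2 ∂μ) - ∫ ω, (dd t₀ (X ω)) ^ 2 ∂μ with hδdef
  clear_value δ
  have hδpos : 0 < δ := by
    rw [hδdef]
    have hint : Integrable (fun ω => ‖X ω - t₀‖ ^ 2 - (dd t₀ (X ω)) ^ 2) μ :=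
      hXt2.sub (hdd2_int t₀)
    have hnn : 0 ≤ fun ω => ‖X ω - t₀‖ ^ 2 - (dd t₀ (X ω)) ^ 2 := by
      intro ω
      have h1 := dd_le t₀ (X ω); have h2 := dd_nonneg t₀ (X ω)
      simp only [Pi.zero_apply]
      nlinarith
    have hpos' : 0 < ∫ ω, (‖X ω - t₀‖ ^ 2 - (dd t₀ (X ω)) ^ 2) ∂μ := by
      rw [integral_pos_iff_support_of_nonneg hnn hint]
      refine lt_of_lt_of_le (hy r hr) (measure_mono ?_)
      intro ω hω
      have h1 : dd t₀ (X ω) ≤ ‖X ω - g₀ • t₀‖ := by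
        have h2 := dd_le' t₀ (X ω) g₀⁻¹
        have h3 : ‖g₀⁻¹ • X ω - t₀‖ = ‖X ω - g₀ • t₀‖ := by
          rw [← hiso2 g₀ (g₀⁻¹ • X ω) t₀, smul_inv_smul]
        rwa [h3] at h2
      have h4 : ‖X ω - g₀ • t₀‖ < ‖X ω - t₀‖ := by
        rw [norm_sub_rev, norm_sub_rev (X ω)]
        exact hkey _ hω
      have h5 : dd t₀ (X ω) < ‖X ω - t₀‖ := h1.trans_lt h4
      have h6 : (dd t₀ (X ω)) ^ 2 < ‖X ω - t₀‖ ^ 2 := by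
        nlinarith [dd_nonneg t₀ (X ω)]
      simp only [Function.mem_support]
      exact ne_of_gt (by linarith)
    rw [← integral_sub hXt2 (hdd2_int t₀)]
    exact hpos'
  have ht₀pos : 0 < ‖t₀‖ := norm_pos_iff.2 ht₀
  set β : ℝ := δ / (4 * ‖t₀‖) with hβdef
  clear_value β
  have hβ : 0 < β := by rw [hβdef]; exact div_pos hδpos (by positivity)
  set I₁ : ℝ := ∫ ω, dd t₀ (X ω) ∂μ with hI₁def
  clear_value I₁
  have hI₁0 : 0 ≤ I₁ := by
    rw [hI₁def]; exact integral_nonneg fun ω => dd_nonneg _ _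
  set κ : ℝ := min (δ / 2) (β ^ 2) with hκdef
  clear_value κ
  have hκ : 0 < κ := by rw [hκdef]; exact lt_min (by linarith) (by positivity)
  have hκδ : κ ≤ δ / 2 := hκdef ▸ min_le_left _ _
  have hκβ : κ ≤ β ^ 2 := hκdef ▸ min_le_right _ _
  set θ : ℝ := min 1 (κ / (2 * (2 * I₁ + 1))) with hθdef
  clear_value θ
  have hθ : 0 < θ := by rw [hθdef]; exact lt_min one_pos (by positivity)
  have hθ1 : θ ≤ 1 := hθdef ▸ min_le_left _ _
  have hcθ : 2 * θ * I₁ + θ ^ 2 ≤ κ / 2 := by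
    have h1 : θ ≤ κ / (2 * (2 * I₁ + 1)) := hθdef ▸ min_le_right _ _
    have h2 : (0:ℝ) < 2 * I₁ + 1 := by linarith
    have h3 : θ * (2 * I₁ + 1) ≤ κ / 2 := by
      calc θ * (2 * I₁ + 1) ≤ (κ / (2 * (2 * I₁ + 1))) * (2 * I₁ + 1) :=
            mul_le_mul_of_nonneg_right h1 (le_of_lt h2)
        _ = κ / 2 := by field_simp
    have h4 : θ ^ 2 ≤ θ := by nlinarith [mul_le_mul_of_nonneg_left hθ1 hθ.le]
    linarith only [h3, h4, mul_nonneg hθ.le hI₁0]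
  -- near-optimal countable selection
  obtain ⟨T, hT, hTae⟩ := hXint.aestronglyMeasurable
  have hsep : TopologicalSpace.IsSeparable (Set.range T) := hT.isSeparable_range
  obtain ⟨c0, hc0c, hc0s⟩ := hsep
  have hc1c : (insert t₀ c0).Countable := hc0c.insert _
  obtain ⟨x, hx⟩ := hc1c.exists_eq_range ⟨t₀, Set.mem_insert _ _⟩
  set η : ℝ := θ / 4 with hηdef
  clear_value η
  have hη0 : 0 < η := by rw [hηdef]; positivity
  have hex : ∀ ω, ∃ n, ‖T ω - x n‖ < η := by
    intro ω
    have h1 : T ω ∈ closure (insert t₀ c0) :=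
      closure_mono (Set.subset_insert _ _) (hc0s (Set.mem_range_self ω))
    obtain ⟨b, hb, hdist⟩ := Metric.mem_closure_iff.1 h1 η hη0
    rw [hx] at hb; obtain ⟨n, rfl⟩ := hb
    exact ⟨n, by rwa [← dist_eq_norm]⟩
  have hgsel : ∀ n, ∃ g : G, ‖g • x n - t₀‖ < dd t₀ (x n) + θ / 4 := by
    intro n
    simp only [hdd]
    refine exists_lt_of_ciInf_lt ?_
    exact lt_add_of_pos_right _ (by positivity)
  choose gsel hgselspec using hgsel
  set Z : Ω → M := fun ω => gsel (Nat.find (hex ω)) • T ω with hZdef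
  clear_value Z
  have hZbound : ∀ ω, ‖Z ω - t₀‖ ≤ dd t₀ (T ω) + θ := by
    intro ω
    set n := Nat.find (hex ω) with hn
    have h1 : ‖T ω - x n‖ < η := Nat.find_spec (hex ω)
    have h2 : ‖gsel n • T ω - t₀‖ ≤ ‖gsel n • x n - t₀‖ + ‖T ω - x n‖ := by
      calc ‖gsel n • T ω - t₀‖
          = ‖(gsel n • x n - t₀) + (gsel n • T ω - gsel n • x n)‖ := by congr 1; abel
        _ ≤ ‖gsel n • x n - t₀‖ + ‖gsel n • T ω - gsel n • x n‖ := norm_add_le _ _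
        _ = ‖gsel n • x n - t₀‖ + ‖T ω - x n‖ := by rw [hiso2]
    have h3 := hgselspec n
    have h4 : dd t₀ (x n) ≤ dd t₀ (T ω) + ‖x n - T ω‖ := dd_lip _ _ _
    have h5 : ‖x n - T ω‖ = ‖T ω - x n‖ := norm_sub_rev _ _
    have h6 : ‖Z ω - t₀‖ = ‖gsel n • T ω - t₀‖ := by
      simp only [hZdef]
      rfl
    rw [h6]
    rw [hηdef] at h1
    linarith
  have hZnorm : ∀ ω, ‖Z ω‖ = ‖T ω‖ := fun ω => by
    simp only [hZdef]; exact hiso _ _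
  have hTmeas : Measurable T := hT.measurable
  have hsmul_cont : ∀ g : G, Continuous (fun z : M => g • z) := by
    intro g
    have h : Isometry (fun z : M => g • z) :=
      Isometry.of_dist_eq fun p q => by simp [dist_eq_norm, hiso2]
    exact h.continuous
  have hNmeas : Measurable (fun ω => Nat.find (hex ω)) := by
    refine measurable_find hex fun k => ?_
    have h : {ω | ‖T ω - x k‖ < η} = T ⁻¹' Metric.ball (x k) η := by
      ext ω; simp [Metric.mem_ball, dist_eq_norm]
    rw [h]
    exact hTmeas measurableSet_ball
  have hZmeas : Measurable Z := by
    rw [hZdef]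
    have h1 : Measurable (fun p : M × ℕ => gsel p.2 • p.1) :=
      measurable_from_prod_countable_left fun n => (hsmul_cont (gsel n)).measurable
    exact h1.comp (hTmeas.prodMk hNmeas)
  have hZaesm : AEStronglyMeasurable Z μ := by
    rw [aestronglyMeasurable_iff_aemeasurable_separable]
    refine ⟨hZmeas.aemeasurable,
      ⋃ n, (fun z => gsel n • z) '' Set.range T,
      TopologicalSpace.IsSeparable.iUnion (fun n => (hT.isSeparable_range).image (hsmul_cont _)),
      ae_of_all _ fun ω => ?_⟩
    simp only [hZdef]
    exact Set.mem_iUnion.2 ⟨Nat.find (hex ω), Set.mem_image_of_mem _ (Set.mem_range_self ω)⟩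
  have hTXnorm : ∀ᵐ ω ∂μ, ‖Z ω‖ = ‖X ω‖ :=
    hTae.mono fun ω h => by rw [hZnorm ω, ← h]
  have hZint : Integrable Z μ :=
    Integrable.mono' hXnorm hZaesm (hTXnorm.mono fun ω h => le_of_eq h)
  have hZt2int : Integrable (fun ω => ‖Z ω - t₀‖ ^ 2) μ := by
    refine Integrable.mono' (hnormsq_int t₀)
      (((continuous_id.sub continuous_const).norm.pow 2).comp_aestronglyMeasurable hZaesm)
      (hTXnorm.mono fun ω h => ?_)
    have h1 : ‖Z ω - t₀‖ ≤ ‖X ω‖ + ‖t₀‖ := (norm_sub_le _ _).trans (by rw [h])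
    rw [Real.norm_eq_abs, abs_of_nonneg (by positivity)]
    nlinarith [norm_nonneg (Z ω - t₀)]
  have hZsqint : Integrable (fun ω => ‖Z ω‖ ^ 2) μ :=
    hX2.congr (hTXnorm.mono fun ω h => by simp only [h])
  have hinner_int : ∀ (u₀ : M) (f : Ω → M), AEStronglyMeasurable f μ →
      (∀ᵐ ω ∂μ, ‖f ω‖ ≤ ‖X ω‖ + ‖t₀‖) → Integrable (fun ω => ⟪u₀, f ω⟫) μ := by
    intro u₀ f hf hbound
    have hb : Integrable (fun ω => ‖u₀‖ * (‖X ω‖ + ‖t₀‖)) μ := hXnormc.const_mul _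
    refine Integrable.mono' hb
      (AEStronglyMeasurable.inner aestronglyMeasurable_const hf)
      (hbound.mono fun ω h => ?_)
    have h2 := abs_real_inner_le_norm u₀ (f ω)
    rw [Real.norm_eq_abs]
    calc |⟪u₀, f ω⟫| ≤ ‖u₀‖ * ‖f ω‖ := h2
      _ ≤ ‖u₀‖ * (‖X ω‖ + ‖t₀‖) := by
          apply mul_le_mul_of_nonneg_left _ (norm_nonneg _)
          exact h.trans (by linarith [norm_nonneg (X ω), norm_nonneg t₀])
  have hZbound_ae : ∀ᵐ ω ∂μ, ‖Z ω‖ ≤ ‖X ω‖ + ‖t₀‖ :=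
    hTXnorm.mono fun ω h => by rw [h]; linarith [norm_nonneg t₀, norm_nonneg (X ω)]
  have hinnerZ : Integrable (fun ω => ⟪t₀, Z ω⟫) μ := hinner_int t₀ Z hZaesm hZbound_ae
  have hinnerX : Integrable (fun ω => ⟪t₀, X ω⟫) μ :=
    hinner_int t₀ X hXaesm (ae_of_all _ fun ω => by linarith [norm_nonneg t₀])
  -- expansion identities
  have hexpand : ∀ (f : Ω → M), Integrable f μ → Integrable (fun ω => ‖f ω‖ ^ 2) μ →
      Integrable (fun ω => ⟪t₀, f ω⟫) μ →
      ∫ ω, ‖f ω - t₀‖ ^ 2 ∂μ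
        = (∫ ω, ‖f ω‖ ^ 2 ∂μ) - 2 * ⟪t₀, ∫ ω, f ω ∂μ⟫ + ‖t₀‖ ^ 2 := by
    intro f hfint hfsq hfin
    have hptw : ∀ ω, ‖f ω - t₀‖ ^ 2 = ‖f ω‖ ^ 2 - 2 * ⟪t₀, f ω⟫ + ‖t₀‖ ^ 2 := fun ω => by
      rw [norm_sub_sq_real, real_inner_comm]
    have hsubint : Integrable (fun ω => ‖f ω‖ ^ 2 - 2 * ⟪t₀, f ω⟫) μ :=
      hfsq.sub (hfin.const_mul 2)
    calc ∫ ω, ‖f ω - t₀‖ ^ 2 ∂μ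
        = ∫ ω, (‖f ω‖ ^ 2 - 2 * ⟪t₀, f ω⟫ + ‖t₀‖ ^ 2) ∂μ :=
          integral_congr_ae (ae_of_all _ hptw)
      _ = (∫ ω, (‖f ω‖ ^ 2 - 2 * ⟪t₀, f ω⟫) ∂μ) + ∫ ω, (‖t₀‖ ^ 2 : ℝ) ∂μ :=
          integral_add hsubint (integrable_const _)
      _ = (∫ ω, ‖f ω‖ ^ 2 ∂μ) - (∫ ω, 2 * ⟪t₀, f ω⟫ ∂μ) + ∫ ω, (‖t₀‖ ^ 2 : ℝ) ∂μ := by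
          rw [integral_sub hfsq (hfin.const_mul 2)]
      _ = (∫ ω, ‖f ω‖ ^ 2 ∂μ) - 2 * ⟪t₀, ∫ ω, f ω ∂μ⟫ + ‖t₀‖ ^ 2 := by
          rw [integral_const_mul, integral_inner hfint, integral_const]
          simp [measure_univ]
  have hA : ∫ ω, ‖Z ω - t₀‖ ^ 2 ∂μ
      = (∫ ω, ‖X ω‖ ^ 2 ∂μ) - 2 * ⟪t₀, ∫ ω, Z ω ∂μ⟫ + ‖t₀‖ ^ 2 := by
    rw [hexpand Z hZint hZsqint hinnerZ]
    congr 2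
    exact integral_congr_ae (hTXnorm.mono fun ω h => by simp only [h])
  have hA0 : ∫ ω, ‖X ω - t₀‖ ^ 2 ∂μ = (∫ ω, ‖X ω‖ ^ 2 ∂μ) - ‖t₀‖ ^ 2 := by
    rw [hexpand X hXint hX2 hinnerX, hXmean, real_inner_self_eq_norm_sq]
    ring
  -- step B
  have hB : ∫ ω, ‖Z ω - t₀‖ ^ 2 ∂μ
      ≤ (∫ ω, (dd t₀ (X ω)) ^ 2 ∂μ) + (2 * θ * I₁ + θ ^ 2) := by
    have hrhsint : Integrable
        (fun ω => (dd t₀ (X ω)) ^ 2 + 2 * θ * (dd t₀ (X ω)) + θ ^ 2) μ :=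
      ((hdd2_int t₀).add (hdd1_int.const_mul _)).add (integrable_const _)
    have hptw : ∀ᵐ ω ∂μ, ‖Z ω - t₀‖ ^ 2
        ≤ (dd t₀ (X ω)) ^ 2 + 2 * θ * (dd t₀ (X ω)) + θ ^ 2 := by
      refine hTae.mono fun ω h => ?_
      have h1 := hZbound ω
      rw [← h] at h1
      nlinarith [norm_nonneg (Z ω - t₀), dd_nonneg t₀ (X ω)]
    calc ∫ ω, ‖Z ω - t₀‖ ^ 2 ∂μ
        ≤ ∫ ω, ((dd t₀ (X ω)) ^ 2 + 2 * θ * (dd t₀ (X ω)) + θ ^ 2) ∂μ :=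
          integral_mono_ae hZt2int hrhsint hptw
      _ = (∫ ω, (dd t₀ (X ω)) ^ 2 ∂μ) + (2 * θ * I₁ + θ ^ 2) := by
          have hq1 : Integrable (fun ω => (dd t₀ (X ω)) ^ 2 + 2 * θ * (dd t₀ (X ω))) μ :=
            (hdd2_int t₀).add (hdd1_int.const_mul (2 * θ))
          rw [integral_add hq1 (integrable_const _),
            integral_add (hdd2_int t₀) (hdd1_int.const_mul (2 * θ)), integral_const_mul,
            integral_const]
          rw [hI₁def]
          simp [measure_univ]
          ring
  -- deduce the mean of Z is moved in direction t₀
  set w : M := (∫ ω, Z ω ∂μ) - t₀ with hwdef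
  clear_value w
  have hwt : δ / 4 ≤ ⟪t₀, w⟫ := by
    have h1 : ∫ ω, (dd t₀ (X ω)) ^ 2 ∂μ = (∫ ω, ‖X ω - t₀‖ ^ 2 ∂μ) - δ := by
      rw [hδdef]; ring
    have h2 : ⟪t₀, w⟫ = ⟪t₀, ∫ ω, Z ω ∂μ⟫ - ‖t₀‖ ^ 2 := by
      rw [hwdef, inner_sub_right, real_inner_self_eq_norm_sq]
    rw [h2]
    have h3 := hB
    rw [h1, hA0] at h3
    rw [hA] at h3
    linarith only [h3, hcθ, hκδ, hδpos]
  have hwn : β ≤ ‖w‖ := by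
    have h1 : ⟪t₀, w⟫ ≤ ‖t₀‖ * ‖w‖ := real_inner_le_norm _ _
    rw [hβdef, div_le_iff₀ (by positivity)]
    linarith only [h1, hwt]
  have hwne : w ≠ 0 := by
    intro h; rw [h, norm_zero] at hwn; linarith
  have hwpos : 0 < ‖w‖ := norm_pos_iff.2 hwne
  set u : M := ‖w‖⁻¹ • w with hudef
  clear_value u
  have hu1 : ‖u‖ = 1 := by
    rw [hudef, norm_smul, norm_inv, norm_norm]
    field_simp
  have huw : ⟪u, w⟫ = ‖w‖ := by
    rw [hudef, real_inner_smul_left, real_inner_self_eq_norm_sq]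
    field_simp
  set m : M := t₀ + β • u with hmdef
  clear_value m
  -- final estimate
  have hinnerU : Integrable (fun ω => ⟪u, Z ω - t₀⟫) μ := by
    have h := hinner_int u (fun ω => Z ω - t₀) (hZaesm.sub aestronglyMeasurable_const)
      (hTXnorm.mono fun ω h => (norm_sub_le _ _).trans (by rw [h]))
    exact h
  have hZsubint : Integrable (fun ω => Z ω - t₀) μ := hZint.sub (integrable_const _)
  have hintU : ∫ ω, ⟪u, Z ω - t₀⟫ ∂μ = ‖w‖ := by
    rw [integral_inner hZsubint]
    rw [integral_sub hZint (integrable_const t₀), integral_const]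
    simp only [measure_univ, probReal_univ, ENNReal.toReal_one, one_smul]
    rw [← hwdef, huw]
  have hlast : ∫ ω, (dd m (X ω)) ^ 2 ∂μ
      ≤ (∫ ω, ‖Z ω - t₀‖ ^ 2 ∂μ) - 2 * β * ‖w‖ + β ^ 2 := by
    have hptw : ∀ᵐ ω ∂μ, (dd m (X ω)) ^ 2
        ≤ ‖Z ω - t₀‖ ^ 2 - 2 * β * ⟪u, Z ω - t₀⟫ + β ^ 2 := by
      refine hTae.mono fun ω h => ?_
      have hZω : Z ω = gsel (Nat.find (hex ω)) • T ω := by simp only [hZdef]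
      have h1 := dd_le' m (T ω) (gsel (Nat.find (hex ω)))
      rw [← hZω, ← h] at h1
      have h1' : dd m (X ω) ≤ ‖Z ω - m‖ := h1
      have h2 : Z ω - m = (Z ω - t₀) - β • u := by rw [hmdef]; abel
      have h3 : ‖Z ω - m‖ ^ 2 = ‖Z ω - t₀‖ ^ 2 - 2 * β * ⟪u, Z ω - t₀⟫ + β ^ 2 := by
        rw [h2, norm_sub_sq_real, real_inner_smul_right, norm_smul]
        rw [Real.norm_eq_abs, abs_of_pos hβ, hu1, real_inner_comm]
        ring
      have h4 : (dd m (X ω)) ^ 2 ≤ ‖Z ω - m‖ ^ 2 :=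
        pow_le_pow_left₀ (dd_nonneg _ _) h1' 2
      linarith
    have hq2 : Integrable (fun ω => ‖Z ω - t₀‖ ^ 2 - 2 * β * ⟪u, Z ω - t₀⟫) μ :=
      hZt2int.sub (hinnerU.const_mul (2 * β))
    have hrhsint : Integrable
        (fun ω => ‖Z ω - t₀‖ ^ 2 - 2 * β * ⟪u, Z ω - t₀⟫ + β ^ 2) μ :=
      hq2.add (integrable_const _)
    calc ∫ ω, (dd m (X ω)) ^ 2 ∂μ
        ≤ ∫ ω, (‖Z ω - t₀‖ ^ 2 - 2 * β * ⟪u, Z ω - t₀⟫ + β ^ 2) ∂μ :=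
          integral_mono_ae (hdd2_int m) hrhsint hptw
      _ = (∫ ω, ‖Z ω - t₀‖ ^ 2 ∂μ) - 2 * β * ‖w‖ + β ^ 2 := by
          rw [integral_add hq2 (integrable_const _),
            integral_sub hZt2int (hinnerU.const_mul (2 * β)), integral_const_mul, hintU,
            integral_const]
          simp [measure_univ]
  have hm_lt : ∫ ω, (dd m (X ω)) ^ 2 ∂μ < ∫ ω, (dd t₀ (X ω)) ^ 2 ∂μ := by
    have h1 : 2 * β * β ≤ 2 * β * ‖w‖ :=
      mul_le_mul_of_nonneg_left hwn (by positivity)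
    have hβ2 : 0 < β ^ 2 := by positivity
    linarith only [hlast, hB, hcθ, hκβ, h1, hβ2]
  have e1 : ∫ ω, (⨅ g : G, ‖g • X ω - t₀‖ ^ 2) ∂μ = ∫ ω, (dd t₀ (X ω)) ^ 2 ∂μ :=
    integral_congr_ae (ae_of_all _ fun ω => dd_sq t₀ (X ω))
  have e2 : ∫ ω, (⨅ g : G, ‖g • X ω - m‖ ^ 2) ∂μ = ∫ ω, (dd m (X ω)) ^ 2 ∂μ :=
    integral_congr_ae (ae_of_all _ fun ω => dd_sq m (X ω))
  have hcon := Hctr m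
  rw [e1, e2] at hcon
  linarith
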